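/- Let (Δ_l)_{l≥0} be a sequence of nonnegative reals with Δ_0 = 0 and Δ_l ≤ 2R^l for all l, for some R ≥ 1. Suppose that for all l ≥ 1, Δ_l ≤ 2 Σ_{k=0}^{l-2} Δ_k R^{l-2-k} + C t Σ_{p=0}^{D-1} Δ_{l+p-1}, where C ≥ 0, t ≥ 0, D ≥ 2. If there exists γ ∈ (0, 1/R) with 2γ²(1-γR)^{-1} + C t Σ_{p=0}^{D-1} γ^{-p+1} < 1, then Δ_l = 0 for all l. -/

import Mathlib

/-- Contraction argument for uniqueness of solutions to the Schwinger-Dyson equation: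
if a nonnegative sequence `Δ` with `Δ 0 = 0`, `Δ l ≤ 2 R^l`, satisfies the recursive
inequality `Δ l ≤ 2 ∑_{k=0}^{l-2} Δ k R^{l-2-k} + C t ∑_{p=0}^{D-1} Δ (l+p-1)`, and
there is `γ ∈ (0, 1/R)` with `2γ²(1-γR)⁻¹ + C t ∑_{p=0}^{D-1} γ^{1-p} < 1`,
then `Δ` vanishes identically. -/
theorem schwinger_dyson_uniqueness_contraction
    (Δ : ℕ → ℝ) (R C t : ℝ) (D : ℕ)
    (hR : 1 ≤ R) (hC : 0 ≤ C) (ht : 0 ≤ t) (hD : 2 ≤ D)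
    (hnonneg : ∀ l, 0 ≤ Δ l) (h0 : Δ 0 = 0)
    (hbd : ∀ l, Δ l ≤ 2 * R ^ l)
    (hrec : ∀ l, 1 ≤ l →
      Δ l ≤ 2 * ∑ k ∈ Finset.range (l - 1), Δ k * R ^ (l - 2 - k)
              + C * t * ∑ p ∈ Finset.range D, Δ (l + p - 1))
    (γ : ℝ) (hγ0 : 0 < γ) (hγR : γ < 1 / R)
    (hcond : 2 * γ ^ 2 * (1 - γ * R)⁻¹
              + C * t * ∑ p ∈ Finset.range D, γ ^ (1 - (p : ℤ)) < 1) :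
    ∀ l, Δ l = 0 := by
  have hR0 : (0:ℝ) < R := lt_of_lt_of_le one_pos hR
  have hγR1 : γ * R < 1 := by
    have h := mul_lt_mul_of_pos_right hγR hR0
    rwa [one_div, inv_mul_cancel₀ (ne_of_gt hR0)] at h
  have h1γR : (0:ℝ) < 1 - γ * R := by linarith
  have hinv : (0:ℝ) ≤ (1 - γ * R)⁻¹ := le_of_lt (inv_pos.mpr h1γR)
  have hγne : γ ≠ 0 := ne_of_gt hγ0
  have hγRnn : (0:ℝ) ≤ γ * R := by positivity
  -- the sequence f l = γ^l Δ l
  set f : ℕ → ℝ := fun l => γ ^ l * Δ l with hf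
  have hfnn : ∀ l, 0 ≤ f l := fun l => mul_nonneg (by positivity) (hnonneg l)
  have hbdd : BddAbove (Set.range f) := by
    refine ⟨2, ?_⟩
    rintro x ⟨l, rfl⟩
    have h1 : f l ≤ γ ^ l * (2 * R ^ l) :=
      mul_le_mul_of_nonneg_left (hbd l) (by positivity)
    have h2 : γ ^ l * (2 * R ^ l) = 2 * (γ * R) ^ l := by rw [mul_pow]; ring
    have h3 : (γ * R) ^ l ≤ 1 := pow_le_one₀ hγRnn (le_of_lt hγR1)
    calc f l ≤ 2 * (γ * R) ^ l := by rw [← h2]; exact h1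
      _ ≤ 2 := by linarith
  set M : ℝ := ⨆ l, f l with hM
  have hfleM : ∀ l, f l ≤ M := fun l => le_ciSup hbdd l
  have hMnn : (0 : ℝ) ≤ M := le_trans (by simp [hf, h0]) (hfleM 0)
  set K : ℝ := 2 * γ ^ 2 * (1 - γ * R)⁻¹
      + C * t * ∑ p ∈ Finset.range D, γ ^ (1 - (p : ℤ)) with hK
  have hsumpos : (0:ℝ) ≤ ∑ p ∈ Finset.range D, γ ^ (1 - (p : ℤ)) :=
    Finset.sum_nonneg fun p _ => le_of_lt (zpow_pos hγ0 _)
  have hKnn : (0:ℝ) ≤ K := by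
    have ha : (0:ℝ) ≤ 2 * γ ^ 2 * (1 - γ * R)⁻¹ := by positivity
    have hb : (0:ℝ) ≤ C * t * ∑ p ∈ Finset.range D, γ ^ (1 - (p : ℤ)) := by positivity
    rw [hK]; linarith
  -- geometric sum bound
  have hgeom : ∀ n : ℕ, ∑ m ∈ Finset.range n, (γ * R) ^ m ≤ (1 - γ * R)⁻¹ := by
    intro n
    have hne : γ * R ≠ 1 := ne_of_lt hγR1
    rw [geom_sum_eq hne]
    rw [div_le_iff_of_neg (by linarith : γ * R - 1 < 0)]
    have : (0:ℝ) ≤ (γ * R) ^ n := by positivity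
    have h1 : (1 - γ * R)⁻¹ * (γ * R - 1) = -1 := by
      field_simp
      ring
    rw [h1]
    linarith
  -- the key estimate
  have hkey : ∀ l, f l ≤ K * M := by
    intro l
    match l with
    | 0 => simpa [hf, h0] using mul_nonneg hKnn hMnn
    | Nat.succ n =>
      have hr := hrec (n + 1) (Nat.le_add_left 1 n)
      have hs1 : n + 1 - 1 = n := rfl
      rw [hs1] at hr
      have hpow : (0:ℝ) ≤ γ ^ (n+1) := by positivity
      have step1 : f (n+1) ≤ γ ^ (n+1) *
          (2 * ∑ k ∈ Finset.range n, Δ k * R ^ (n + 1 - 2 - k)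
            + C * t * ∑ p ∈ Finset.range D, Δ (n + 1 + p - 1)) :=
        mul_le_mul_of_nonneg_left hr hpow
      -- term 1
      have t1 : γ ^ (n+1) * (2 * ∑ k ∈ Finset.range n, Δ k * R ^ (n + 1 - 2 - k))
          ≤ 2 * γ ^ 2 * (1 - γ * R)⁻¹ * M := by
        have e1 : γ ^ (n+1) * (2 * ∑ k ∈ Finset.range n, Δ k * R ^ (n + 1 - 2 - k))
            = 2 * ∑ k ∈ Finset.range n, γ ^ (n+1) * (Δ k * R ^ (n + 1 - 2 - k)) := by
          rw [mul_left_comm, Finset.mul_sum]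
        rw [e1]
        have hterm : ∀ k ∈ Finset.range n,
            γ ^ (n+1) * (Δ k * R ^ (n + 1 - 2 - k)) ≤ M * γ ^ 2 * (γ * R) ^ (n - 1 - k) := by
          intro k hk
          have hkn : k < n := Finset.mem_range.mp hk
          have hexp : n + 1 - 2 - k = n - 1 - k := by omega
          have hsplit : n + 1 = k + 2 + (n - 1 - k) := by omega
          rw [hexp, hsplit, pow_add, pow_add, mul_pow]
          have hfk : γ ^ k * Δ k ≤ M := hfleM k
          have hnn : (0:ℝ) ≤ γ ^ 2 * (γ ^ (n-1-k) * R ^ (n-1-k)) := by positivity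
          calc γ ^ k * γ ^ 2 * γ ^ (n-1-k) * (Δ k * R ^ (n-1-k))
              = (γ ^ k * Δ k) * (γ ^ 2 * (γ ^ (n-1-k) * R ^ (n-1-k))) := by ring
            _ ≤ M * (γ ^ 2 * (γ ^ (n-1-k) * R ^ (n-1-k))) :=
                mul_le_mul_of_nonneg_right hfk hnn
            _ = M * γ ^ 2 * (γ ^ (n-1-k) * R ^ (n-1-k)) := by ring
        have hsum := Finset.sum_le_sum hterm
        have e2 : ∑ k ∈ Finset.range n, M * γ ^ 2 * (γ * R) ^ (n - 1 - k)
            = M * γ ^ 2 * ∑ k ∈ Finset.range n, (γ * R) ^ (n - 1 - k) := by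
          rw [Finset.mul_sum]
        have e3 : ∑ k ∈ Finset.range n, (γ * R) ^ (n - 1 - k)
            = ∑ m ∈ Finset.range n, (γ * R) ^ m := by
          rw [← Finset.sum_range_reflect]
          apply Finset.sum_congr rfl
          intro k hk
          have hkn : k < n := Finset.mem_range.mp hk
          congr 1
          omega
        have hsum2 : ∑ k ∈ Finset.range n, γ ^ (n+1) * (Δ k * R ^ (n + 1 - 2 - k))
            ≤ M * γ ^ 2 * (1 - γ * R)⁻¹ := by
          calc ∑ k ∈ Finset.range n, γ ^ (n+1) * (Δ k * R ^ (n + 1 - 2 - k))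
              ≤ M * γ ^ 2 * ∑ k ∈ Finset.range n, (γ * R) ^ (n - 1 - k) := by
                rw [← e2]; exact hsum
            _ = M * γ ^ 2 * ∑ m ∈ Finset.range n, (γ * R) ^ m := by rw [e3]
            _ ≤ M * γ ^ 2 * (1 - γ * R)⁻¹ := by
                apply mul_le_mul_of_nonneg_left (hgeom n) (by positivity)
        linarith [hsum2]
      -- term 2
      have t2 : γ ^ (n+1) * (C * t * ∑ p ∈ Finset.range D, Δ (n + 1 + p - 1))
          ≤ C * t * (∑ p ∈ Finset.range D, γ ^ (1 - (p : ℤ))) * M := by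
        have e1 : γ ^ (n+1) * (C * t * ∑ p ∈ Finset.range D, Δ (n + 1 + p - 1))
            = C * t * ∑ p ∈ Finset.range D, γ ^ (n+1) * Δ (n + 1 + p - 1) := by
          rw [mul_left_comm, Finset.mul_sum]
        rw [e1]
        have hterm : ∀ p ∈ Finset.range D,
            γ ^ (n+1) * Δ (n + 1 + p - 1) ≤ γ ^ (1 - (p:ℤ)) * M := by
          intro p _
          have hidx : n + 1 + p - 1 = n + p := by omega
          rw [hidx]
          have hz : (γ : ℝ) ^ ((n:ℤ)+1) = γ ^ (1 - (p:ℤ)) * γ ^ ((n:ℤ)+(p:ℤ)) := by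
            rw [← zpow_add₀ hγne]
            congr 1
            ring
          have hz2 : γ ^ (n+1) = γ ^ (1 - (p:ℤ)) * γ ^ (n+p) := by
            have := hz
            rw [show ((n:ℤ)+1) = ((n+1 : ℕ) : ℤ) by push_cast; ring,
                show ((n:ℤ)+(p:ℤ)) = ((n+p : ℕ) : ℤ) by push_cast; ring,
                zpow_natCast, zpow_natCast] at this
            exact this
          rw [hz2, mul_assoc]
          apply mul_le_mul_of_nonneg_left _ (le_of_lt (zpow_pos hγ0 _))
          exact hfleM (n+p)
        have hsum := Finset.sum_le_sum hterm
        have e2 : ∑ p ∈ Finset.range D, γ ^ (1 - (p:ℤ)) * M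
            = (∑ p ∈ Finset.range D, γ ^ (1 - (p:ℤ))) * M := by
          rw [Finset.sum_mul]
        calc C * t * ∑ p ∈ Finset.range D, γ ^ (n+1) * Δ (n + 1 + p - 1)
            ≤ C * t * ∑ p ∈ Finset.range D, γ ^ (1 - (p:ℤ)) * M := by
              apply mul_le_mul_of_nonneg_left hsum (by positivity)
          _ = C * t * (∑ p ∈ Finset.range D, γ ^ (1 - (p:ℤ))) * M := by rw [e2]; ring
      calc f (n+1) ≤ γ ^ (n+1) *
          (2 * ∑ k ∈ Finset.range n, Δ k * R ^ (n + 1 - 2 - k)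
            + C * t * ∑ p ∈ Finset.range D, Δ (n + 1 + p - 1)) := step1
        _ = γ ^ (n+1) * (2 * ∑ k ∈ Finset.range n, Δ k * R ^ (n + 1 - 2 - k))
            + γ ^ (n+1) * (C * t * ∑ p ∈ Finset.range D, Δ (n + 1 + p - 1)) := by ring
        _ ≤ 2 * γ ^ 2 * (1 - γ * R)⁻¹ * M
            + C * t * (∑ p ∈ Finset.range D, γ ^ (1 - (p:ℤ))) * M := add_le_add t1 t2
        _ = K * M := by rw [hK]; ring
  have hMK : M ≤ K * M := ciSup_le hkey
  have hM0 : M = 0 := by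
    rcases hMnn.lt_or_eq with h | h
    · exfalso
      have := mul_lt_of_lt_one_left h hcond
      linarith
    · exact h.symm
  intro l
  have h1 : f l ≤ 0 := hM0 ▸ hfleM l
  have h2 : 0 ≤ f l := hfnn l
  have h3 : γ ^ l * Δ l = 0 := le_antisymm h1 h2
  have hp : (0:ℝ) < γ ^ l := by positivity
  exact (mul_eq_zero.mp h3).resolve_left (ne_of_gt hp)
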